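/- With H = (Z/p)^s acting faithfully on V^# = kX ⊕ kY as in the unipotent triangular action (g_i fixes Y, sends X to X - μ_iY with μ_i 𝔽_p-linearly independent), for every n ≥ p^s there is an isomorphism of kH-modules S^n(V^#) ≅ kH ⊕ S^{n - p^s}(V^#). -/

import Mathlib

open MvPolynomial

/-- The `k`-algebra automorphism of `k[X,Y]` determined by `X ↦ X - cY`, `Y ↦ Y`
(we write `X = X 0`, `Y = X 1`). -/
noncomputable def substAct (k : Type*) [CommRing k] (c : k) :
    MvPolynomial (Fin 2) k →ₐ[k] MvPolynomial (Fin 2) k :=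
  aeval (fun j => if j = 0 then X 0 - C c * X 1 else X 1)

namespace SymmAux

variable {k : Type*} [Field k]

/-- exponent vector `(j, m-j)` -/
noncomputable def dvec (m j : ℕ) : Fin 2 →₀ ℕ :=
  Finsupp.single 0 j + Finsupp.single 1 (m - j)

lemma dvec_apply_zero (m j : ℕ) : dvec m j 0 = j := by
  simp [dvec, Finsupp.single_apply]

lemma degree_fin2 (d : Fin 2 →₀ ℕ) : Finsupp.degree d = d 0 + d 1 := by
  rw [Finsupp.degree_apply, Finset.sum_subset (Finset.subset_univ d.support)]
  · exact Fin.sum_univ_two d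
  · intro x _ hx
    simpa using (Finsupp.notMem_support_iff.mp hx)

lemma dvec_degree {m j : ℕ} (hj : j ≤ m) : Finsupp.degree (dvec m j) = m := by
  rw [degree_fin2]
  simp [dvec, Finsupp.single_apply]
  omega

lemma eq_dvec_of_degree {d : Fin 2 →₀ ℕ} {m : ℕ} (hd : Finsupp.degree d = m) :
    d = dvec m (d 0) := by
  have h2 : d 1 = m - d 0 := by rw [degree_fin2] at hd; omega
  ext j
  fin_cases j
  · simp [dvec, Finsupp.single_apply]
  · simp [dvec, Finsupp.single_apply, ← h2]

end SymmAux

namespace SymmAux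

variable {k : Type*} [Field k]

noncomputable def coeffMap (k : Type*) [Field k] (m : ℕ) :
    homogeneousSubmodule (Fin 2) k m →ₗ[k] (Fin (m+1) → k) where
  toFun f := fun j => MvPolynomial.coeff (dvec m j) f.1
  map_add' f g := by ext j; simp [MvPolynomial.coeff_add]
  map_smul' c f := by ext j; simp [MvPolynomial.coeff_smul]

noncomputable def monMap (k : Type*) [Field k] (m : ℕ) :
    (Fin (m+1) → k) →ₗ[k] homogeneousSubmodule (Fin 2) k m where
  toFun v := ⟨∑ j : Fin (m+1), MvPolynomial.monomial (dvec m (j : ℕ)) (v j),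
    Submodule.sum_mem _ fun j _ => (mem_homogeneousSubmodule _ _).2
      (isHomogeneous_monomial _ (dvec_degree (Nat.lt_succ_iff.mp j.2)))⟩
  map_add' v w := by
    ext1
    simp [← Finset.sum_add_distrib, map_add]
  map_smul' c v := by
    ext1
    simp [Finset.smul_sum, MvPolynomial.smul_monomial]

lemma coeffMap_monMap (m : ℕ) (v : Fin (m+1) → k) :
    coeffMap k m (monMap k m v) = v := by
  ext l
  simp only [coeffMap, monMap, LinearMap.coe_mk, AddHom.coe_mk, MvPolynomial.coeff_sum,
    MvPolynomial.coeff_monomial]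
  rw [Finset.sum_eq_single l]
  · simp
  · intro j _ hj
    rw [if_neg]
    intro h
    apply hj
    have := congrArg (fun d => d 0) h
    simp only [dvec_apply_zero] at this
    exact Fin.ext this
  · intro h; exact absurd (Finset.mem_univ l) h

lemma coeffMap_injective (m : ℕ) : Function.Injective (coeffMap k m) := by
  rw [injective_iff_map_eq_zero]
  intro f hf
  ext1
  apply MvPolynomial.ext
  intro d
  simp only [Submodule.coe_zero, MvPolynomial.coeff_zero]
  by_cases hd : Finsupp.degree d = m
  · have h0 : d 0 ≤ m := le_of_le_of_eq (le_trans (Finsupp.le_degree 0 d) le_rfl) hd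
    have := congrFun hf ⟨d 0, Nat.lt_succ_of_le h0⟩
    simp only [coeffMap, LinearMap.coe_mk, AddHom.coe_mk, Pi.zero_apply] at this
    rw [eq_dvec_of_degree hd]
    exact this
  · exact f.2.coeff_eq_zero hd

noncomputable def coeffEquiv (k : Type*) [Field k] (m : ℕ) :
    homogeneousSubmodule (Fin 2) k m ≃ₗ[k] (Fin (m+1) → k) :=
  LinearEquiv.ofBijective (coeffMap k m)
    ⟨coeffMap_injective m, fun v => ⟨monMap k m v, coeffMap_monMap m v⟩⟩

instance (m : ℕ) : FiniteDimensional k (homogeneousSubmodule (Fin 2) k m) :=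
  Module.Finite.equiv (coeffEquiv k m).symm

lemma finrank_homog (m : ℕ) :
    Module.finrank k (homogeneousSubmodule (Fin 2) k m) = m + 1 := by
  rw [(coeffEquiv k m).finrank_eq]
  simp

end SymmAux

namespace SymmAux

variable {k : Type*} [Field k]

/-- evaluation point `(t, 1)` -/
noncomputable def pt (t : k) : Fin 2 → k := fun i => if i = 0 then t else 1

lemma dvec_apply_one {m j : ℕ} : dvec m j 1 = m - j := by
  simp [dvec, Finsupp.single_apply]

lemma monMap_coeffMap (m : ℕ) (f : homogeneousSubmodule (Fin 2) k m) :
    monMap k m (coeffMap k m f) = f :=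
  coeffMap_injective m (coeffMap_monMap m _)

lemma eval_pt (m : ℕ) (f : homogeneousSubmodule (Fin 2) k m) (t : k) :
    MvPolynomial.eval (pt t) f.1 = ∑ j : Fin (m+1), coeffMap k m f j * t ^ (j : ℕ) := by
  conv_lhs => rw [← monMap_coeffMap m f]
  simp only [monMap, LinearMap.coe_mk, AddHom.coe_mk, map_sum, MvPolynomial.eval_monomial]
  refine Finset.sum_congr rfl fun j _ => ?_
  congr 1
  rw [Finsupp.prod_fintype _ _ (fun i => pow_zero _), Fin.prod_univ_two]
  simp [dvec_apply_zero, dvec_apply_one, pt]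

lemma vanish_eq_zero {m : ℕ} {ι : Type*} [Fintype ι] {t : ι → k}
    (ht : Function.Injective t) (hcard : m < Fintype.card ι)
    (f : homogeneousSubmodule (Fin 2) k m)
    (hf : ∀ i, MvPolynomial.eval (pt (t i)) f.1 = 0) : f = 0 := by
  set v := coeffMap k m f with hv
  have hq : (∑ j : Fin (m+1), Polynomial.C (v j) * Polynomial.X ^ (j : ℕ)) = 0 := by
    apply Polynomial.eq_zero_of_natDegree_lt_card_of_eval_eq_zero _ ht
    · intro i
      rw [Polynomial.eval_finset_sum]
      have := hf i
      rw [eval_pt m f, ← hv] at this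
      simpa only [Polynomial.eval_mul, Polynomial.eval_C, Polynomial.eval_pow,
        Polynomial.eval_X] using this
    · refine lt_of_le_of_lt (Polynomial.natDegree_sum_le_of_forall_le _ _ fun j _ => ?_) hcard
      exact le_trans (Polynomial.natDegree_C_mul_le _ _)
        (by simpa using Nat.lt_succ_iff.mp j.2)
  have hv0 : v = 0 := by
    funext l
    have := congrArg (fun q => Polynomial.coeff q (l : ℕ)) hq
    simp only [Polynomial.finset_sum_coeff, Polynomial.coeff_C_mul, Polynomial.coeff_X_pow,
      Polynomial.coeff_zero] at this
    rw [Finset.sum_eq_single l] at this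
    · simpa using this
    · intro j _ hj
      rw [if_neg, mul_zero]
      exact fun h => hj (Fin.ext h.symm)
    · intro h; exact absurd (Finset.mem_univ l) h
  have : coeffMap k m f = coeffMap k m 0 := by rw [← hv, hv0, map_zero]
  exact coeffMap_injective m this

end SymmAux

namespace SymmAux

variable {k : Type*} [Field k]

lemma eval_substAct (c : k) (v : Fin 2 → k) (f : MvPolynomial (Fin 2) k) :
    MvPolynomial.eval v (substAct k c f) =
      MvPolynomial.eval (fun j : Fin 2 => if j = 0 then v 0 - c * v 1 else v 1) f := by
  have h1 : MvPolynomial.eval v (substAct k c f) = aeval v (substAct k c f) := rfl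
  have h2 : ∀ g : MvPolynomial (Fin 2) k, MvPolynomial.eval
      (fun j : Fin 2 => if j = 0 then v 0 - c * v 1 else v 1) g =
      aeval (fun j : Fin 2 => if j = 0 then v 0 - c * v 1 else v 1) g := fun _ => rfl
  have hfun : (fun i : Fin 2 => aeval (R := k) v (if i = 0 then X 0 - C c * X 1 else X 1)) =
      (fun j : Fin 2 => if j = 0 then v 0 - c * v 1 else v 1) := by
    funext j
    by_cases hj : j = 0 <;> simp [hj]
  rw [h1, h2, ← AlgHom.comp_apply, substAct, MvPolynomial.comp_aeval, hfun]

lemma eval_pt_substAct (c t : k) (f : MvPolynomial (Fin 2) k) :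
    MvPolynomial.eval (pt t) (substAct k c f) = MvPolynomial.eval (pt (t - c)) f := by
  rw [eval_substAct]
  have hfun : (fun j : Fin 2 => if j = 0 then pt t 0 - c * pt t 1 else pt t 1) = pt (t - c) := by
    funext j
    by_cases hj : j = 0 <;> simp [hj, pt]
  rw [hfun]

lemma substAct_isHomogeneous (c : k) {f : MvPolynomial (Fin 2) k} {m : ℕ}
    (hf : f.IsHomogeneous m) : (substAct k c f).IsHomogeneous m := by
  have := hf.aeval (fun j : Fin 2 => if j = 0 then (X 0 - C c * X 1 : MvPolynomial (Fin 2) k) else X 1) (n := 1) ?_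
  · simpa [substAct] using this
  · intro i
    by_cases hi : i = 0
    · simp only [hi, if_pos rfl]
      exact (isHomogeneous_X _ _).sub ((isHomogeneous_X _ _).C_mul c)
    · simp only [if_neg hi]
      exact isHomogeneous_X _ _

lemma substAct_X1 (c : k) : substAct k c (X 1) = (X 1 : MvPolynomial (Fin 2) k) := by
  simp [substAct]

lemma substAct_factor (c a : k) :
    substAct k c (X 0 - C a * X 1) = X 0 - C (a + c) * X 1 := by
  simp [substAct, algebraMap_eq]
  ring

end SymmAux

namespace SymmAux

variable {p : ℕ} [Fact p.Prime] {k : Type*} [Field k] [CharP k p] {s : ℕ}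

noncomputable def lam (μ : Fin s → k) (c : Fin s → ZMod p) : k :=
  ∑ i, ZMod.castHom (dvd_refl p) k (c i) * μ i

lemma lam_sub (μ : Fin s → k) (c c' : Fin s → ZMod p) :
    lam μ (c - c') = lam μ c - lam μ c' := by
  simp [lam, sub_mul, Finset.sum_sub_distrib]

lemma lam_injective (μ : Fin s → k)
    (hμ : ∀ c : Fin s → ZMod p,
      ∑ i, ZMod.castHom (dvd_refl p) k (c i) * μ i = 0 → c = 0) :
    Function.Injective (lam (p := p) μ) := by
  intro c c' h
  have h2 : lam μ (c - c') = 0 := by rw [lam_sub, h, sub_self]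
  have := hμ (c - c') h2
  exact sub_eq_zero.mp this

lemma lam_single (μ : Fin s → k) (i : Fin s) : lam (p := p) μ (Pi.single i 1) = μ i := by
  rw [lam, Finset.sum_eq_single i]
  · simp
  · intro j _ hj
    simp [Pi.single_apply, if_neg hj]
  · intro h; exact absurd (Finset.mem_univ i) h

noncomputable def phi (μ : Fin s → k) : MvPolynomial (Fin 2) k :=
  ∏ c : Fin s → ZMod p, (X 0 - C (lam μ c) * X 1)

lemma phi_isHomogeneous (μ : Fin s → k) : (phi (p := p) μ).IsHomogeneous (p ^ s) := by
  have : (phi (p := p) μ).IsHomogeneous (∑ _c : Fin s → ZMod p, 1) := by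
    apply IsHomogeneous.prod
    intro c _
    exact (isHomogeneous_X _ _).sub ((isHomogeneous_X _ _).C_mul _)
  have hcard : (∑ _c : Fin s → ZMod p, 1) = p ^ s := by
    simp [Finset.card_univ, Fintype.card_pi, ZMod.card]
  rwa [hcard] at this

lemma phi_ne_zero (μ : Fin s → k) : (phi (p := p) μ) ≠ 0 := by
  intro h
  have : MvPolynomial.eval (fun j : Fin 2 => if j = 0 then (1:k) else 0) (phi (p := p) μ) = 1 := by
    rw [phi, map_prod]
    apply Finset.prod_eq_one
    intro c _
    simp
  rw [h] at this
  simp at this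

lemma eval_pt_phi (μ : Fin s → k) (c : Fin s → ZMod p) :
    MvPolynomial.eval (pt (lam μ c)) (phi (p := p) μ) = 0 := by
  rw [phi, map_prod]
  apply Finset.prod_eq_zero (Finset.mem_univ c)
  simp [pt]

lemma substAct_phi (μ : Fin s → k) (i : Fin s) :
    substAct k (μ i) (phi (p := p) μ) = phi (p := p) μ := by
  rw [phi, map_prod]
  have hfac : ∀ c : Fin s → ZMod p, substAct k (μ i) (X 0 - C (lam μ c) * X 1) =
      X 0 - C (lam μ (c + Pi.single i 1)) * X 1 := by
    intro c
    rw [substAct_factor]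
    congr 2
    have : c + Pi.single i 1 - Pi.single i 1 = c := by abel
    rw [show lam μ (c + Pi.single i 1) = lam μ (c + Pi.single i 1)
        - lam (p := p) μ (Pi.single i 1) + lam (p := p) μ (Pi.single i 1) by ring,
      ← lam_sub, this, lam_single]
  simp_rw [hfac]
  exact Equiv.prod_comp (Equiv.addRight (Pi.single i 1))
    (fun c => (X 0 - C (lam μ c) * X 1 : MvPolynomial (Fin 2) k))

end SymmAux


open SymmAux

/-- With `H = (ℤ/p)^s` acting faithfully on `V^# = kX ⊕ kY` by the
unipotent triangular action (`gᵢ` fixes `Y` and sends `X` to `X - μᵢY`, where the `μᵢ` are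
`𝔽_p`-linearly independent), for every `n ≥ p^s` there is an isomorphism of `kH`-modules
`Sⁿ(V^#) ≅ kH ⊕ S^{n-p^s}(V^#)`.

Here the isomorphism is formalized as a `k`-linear equivalence
`Sⁿ(V^#) ≃ ((ℤ/p)^s → k) × S^{n-p^s}(V^#)` (the regular representation `kH` being realized as
functions `(ℤ/p)^s → k`, on which the `i`-th generator acts by translating the argument by the
`i`-th basis vector) which commutes with the actions of the generators `g₁, …, g_s` of `H`. -/
theorem symmetric_power_splits (p : ℕ) [Fact p.Prime] (hp : Odd p)
    (k : Type*) [Field k] [CharP k p] (s : ℕ) (hs : 1 ≤ s) (μ : Fin s → k)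
    (hμ : ∀ c : Fin s → ZMod p,
      ∑ i, ZMod.castHom (dvd_refl p) k (c i) * μ i = 0 → c = 0)
    (n : ℕ) (hn : p ^ s ≤ n) :
    ∃ e : homogeneousSubmodule (Fin 2) k n ≃ₗ[k]
        ((Fin s → ZMod p) → k) × homogeneousSubmodule (Fin 2) k (n - p ^ s),
      ∀ i : Fin s, ∀ f g : homogeneousSubmodule (Fin 2) k n,
        substAct k (μ i) (f : MvPolynomial (Fin 2) k) = (g : MvPolynomial (Fin 2) k) →
          ((e g).1 = fun x => (e f).1 (x - Pi.single i 1)) ∧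
          ((e g).2 : MvPolynomial (Fin 2) k) =
            substAct k (μ i) ((e f).2 : MvPolynomial (Fin 2) k) := by
  classical
  have hppos : 0 < p ^ s := pow_pos (Fact.out (p := p.Prime)).pos s
  have hcard : Fintype.card (Fin s → ZMod p) = p ^ s := by
    simp [Fintype.card_pi, ZMod.card]
  set N := p ^ s with hN
  -- the "multiplication" linear map Ψ
  have hmem : ∀ ab : homogeneousSubmodule (Fin 2) k (N - 1) ×
      homogeneousSubmodule (Fin 2) k (n - N),
      (X 1 ^ (n + 1 - N) * ab.1.1 + phi (p := p) μ * ab.2.1) ∈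
        homogeneousSubmodule (Fin 2) k n := by
    intro ab
    have h1 := (isHomogeneous_X_pow (R := k) 1 (n + 1 - N)).mul ab.1.2
    have h2 := (phi_isHomogeneous (p := p) μ).mul ab.2.2
    rw [show (n + 1 - N) + (N - 1) = n by omega] at h1
    rw [show N + (n - N) = n by omega] at h2
    exact Submodule.add_mem _ h1 h2
  let ψ : (homogeneousSubmodule (Fin 2) k (N - 1) ×
      homogeneousSubmodule (Fin 2) k (n - N)) →ₗ[k] homogeneousSubmodule (Fin 2) k n :=
    { toFun := fun ab => ⟨X 1 ^ (n + 1 - N) * ab.1.1 + phi (p := p) μ * ab.2.1, hmem ab⟩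
      map_add' := by
        intro a b
        apply Subtype.ext
        simp only [Prod.fst_add, Prod.snd_add, Submodule.coe_add]
        ring
      map_smul' := by
        intro r a
        apply Subtype.ext
        simp only [Prod.smul_fst, Prod.smul_snd, SetLike.val_smul, smul_eq_C_mul,
          RingHom.id_apply]
        ring }
  have hψval : ∀ ab, (ψ ab : MvPolynomial (Fin 2) k) =
      X 1 ^ (n + 1 - N) * ab.1.1 + phi (p := p) μ * ab.2.1 := fun ab => rfl
  have hinj : Function.Injective ψ := by
    rw [injective_iff_map_eq_zero]
    intro ab hab
    have hval : X 1 ^ (n + 1 - N) * ab.1.1 + phi (p := p) μ * ab.2.1 = 0 :=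
      congrArg Subtype.val hab
    have ha : ab.1 = 0 := by
      refine vanish_eq_zero (lam_injective μ hμ) (by rw [hcard]; omega) _ (fun c => ?_)
      have := congrArg (MvPolynomial.eval (pt (lam μ c))) hval
      rw [map_add, map_mul, map_mul, map_pow, MvPolynomial.eval_X, eval_pt_phi] at this
      simpa [pt] using this
    have hb : ab.2 = 0 := by
      have h1 : ab.1.1 = 0 := congrArg Subtype.val ha
      rw [h1, mul_zero, zero_add] at hval
      rcases mul_eq_zero.mp hval with h | h
      · exact absurd h (phi_ne_zero μ)
      · exact Subtype.ext h
    rw [Prod.ext_iff]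
    exact ⟨ha, hb⟩
  have hrank : Module.finrank k (homogeneousSubmodule (Fin 2) k (N - 1) ×
      homogeneousSubmodule (Fin 2) k (n - N)) =
      Module.finrank k (homogeneousSubmodule (Fin 2) k n) := by
    rw [Module.finrank_prod, finrank_homog, finrank_homog, finrank_homog]
    omega
  let ψe := LinearEquiv.ofBijective ψ
    ⟨hinj, (LinearMap.injective_iff_surjective_of_finrank_eq_finrank hrank).mp hinj⟩
  -- the evaluation map
  let evm : homogeneousSubmodule (Fin 2) k (N - 1) →ₗ[k] ((Fin s → ZMod p) → k) :=
    { toFun := fun a => fun c => MvPolynomial.eval (pt (lam μ c)) a.1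
      map_add' := by intro a b; funext c; simp
      map_smul' := by intro r a; funext c; simp [MvPolynomial.smul_eval]
      }
  have hevinj : Function.Injective evm := by
    rw [injective_iff_map_eq_zero]
    intro a ha
    exact vanish_eq_zero (lam_injective μ hμ) (by rw [hcard]; omega) a
      (fun c => congrFun ha c)
  have hevrank : Module.finrank k (homogeneousSubmodule (Fin 2) k (N - 1)) =
      Module.finrank k ((Fin s → ZMod p) → k) := by
    rw [finrank_homog, Module.finrank_pi, hcard]
    omega
  let eve := LinearEquiv.ofBijective evm
    ⟨hevinj, (LinearMap.injective_iff_surjective_of_finrank_eq_finrank hevrank).mp hevinj⟩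
  refine ⟨ψe.symm.trans (LinearEquiv.prodCongr eve (LinearEquiv.refl k ↥(homogeneousSubmodule (Fin 2) k (n - N)))), ?_⟩
  intro i f g hfg
  set ab := ψe.symm f with hab
  have hf : (f : MvPolynomial (Fin 2) k) =
      X 1 ^ (n + 1 - N) * ab.1.1 + phi (p := p) μ * ab.2.1 := by
    conv_lhs => rw [← ψe.apply_symm_apply f]
    rfl
  have ha' : (substAct k (μ i) ab.1.1).IsHomogeneous (N - 1) :=
    substAct_isHomogeneous _ ab.1.2
  have hb' : (substAct k (μ i) ab.2.1).IsHomogeneous (n - N) :=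
    substAct_isHomogeneous _ ab.2.2
  set a' : homogeneousSubmodule (Fin 2) k (N - 1) := ⟨substAct k (μ i) ab.1.1, ha'⟩ with ha'd
  set b' : homogeneousSubmodule (Fin 2) k (n - N) := ⟨substAct k (μ i) ab.2.1, hb'⟩ with hb'd
  have hkey : ψe (a', b') = g := by
    apply Subtype.ext
    show X 1 ^ (n + 1 - N) * (substAct k (μ i) ab.1.1) +
      phi (p := p) μ * (substAct k (μ i) ab.2.1) = (g : MvPolynomial (Fin 2) k)
    rw [← hfg, hf, map_add, map_mul, map_mul, map_pow, substAct_X1, substAct_phi]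
  have hsymm : ψe.symm g = (a', b') := by rw [← hkey, ψe.symm_apply_apply]
  have heg : (ψe.symm.trans (LinearEquiv.prodCongr eve (LinearEquiv.refl k ↥(homogeneousSubmodule (Fin 2) k (n - N))))) g = (evm a', b') := by
    show (LinearEquiv.prodCongr eve (LinearEquiv.refl k ↥(homogeneousSubmodule (Fin 2) k (n - N)))) (ψe.symm g) = _
    rw [hsymm]
    rfl
  have hef : (ψe.symm.trans (LinearEquiv.prodCongr eve (LinearEquiv.refl k ↥(homogeneousSubmodule (Fin 2) k (n - N))))) f = (evm ab.1, ab.2) := by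
    show (LinearEquiv.prodCongr eve (LinearEquiv.refl k ↥(homogeneousSubmodule (Fin 2) k (n - N)))) (ψe.symm f) = _
    rw [← hab]
    rfl
  rw [heg, hef]
  constructor
  · funext c
    show MvPolynomial.eval (pt (lam μ c)) (substAct k (μ i) ab.1.1) =
      MvPolynomial.eval (pt (lam μ (c - Pi.single i 1))) ab.1.1
    rw [eval_pt_substAct]
    congr 2
    rw [lam_sub, lam_single]
  · rfl
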